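/- Let p be an odd prime, k = 2, and let A_1, e_K, b_1 be integers with 1 ≤ A_1 ≤ e_K, p | b_1, and p < b_1 < p^2. Then the two Eisenstein polynomials f(X) = X^{p^2} + (-1)^{b_1-1} π_K^{A_1+e_K} X^{p^2-b_1+1} + (-1)^{b_1} π_K^{A_1} X^{p^2-b_1} - π_K and g(X) = X^{p^2} + (-1)^{b_1} π_K^{A_1} X^{p^2-b_1} - π_K over a finite extension K of Q_p with uniformizer π_K both generate totally ramified extensions of degree p^2 whose indices of inseparability are i_0 = p^2(A_1 + e_K) - b_1, i_1 = p^2 A_1 - b_1, i_2 = 0. -/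

import Mathlib

open Polynomial Classical

/-- A rank-one valuation `v` on `L`, written additively with values in `ℚ` and
junk value at `0`, which restricts to a normalized (`ℤ`-valued, surjective onto
`ℤ`) complete discrete valuation on the subfield `K`, and whose values on `L`
lie in `(1/n)ℤ`. -/
structure ExtValuation (K L : Type) [Field K] [Field L] [Algebra K L]
    (v : L → ℚ) (n : ℕ) : Prop where
  map_mul : ∀ x y : L, x ≠ 0 → y ≠ 0 → v (x * y) = v x + v y
  map_add : ∀ x y : L, x ≠ 0 → y ≠ 0 → x + y ≠ 0 → min (v x) (v y) ≤ v (x + y)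
  int_on_base : ∀ x : K, x ≠ 0 → ∃ m : ℤ, v (algebraMap K L x) = m
  exists_uniformizer : ∃ x : K, x ≠ 0 ∧ v (algebraMap K L x) = 1
  denom : ∀ x : L, x ≠ 0 → ∃ m : ℤ, v x = (m : ℚ) / n
  complete : ∀ a : ℕ → K,
    (∀ N : ℚ, ∃ M : ℕ, ∀ i ≥ M, ∀ j ≥ M,
      a i = a j ∨ N ≤ v (algebraMap K L (a i - a j))) →
    ∃ l : K, ∀ N : ℚ, ∃ M : ℕ, ∀ i ≥ M,
      a i = l ∨ N ≤ v (algebraMap K L (a i - l))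

/-- The residue field of `K` has characteristic `p`: `p` lies in the maximal
ideal of the valuation ring of `K`. -/
def ResidueCharP (K L : Type) [Field K] [Field L] [Algebra K L]
    (v : L → ℚ) (p : ℕ) : Prop :=
  (p : K) = 0 ∨ 0 < v (algebraMap K L (p : K))

/-- The residue field of `K` is perfect: every unit of the valuation ring is a
`p`-th power modulo the maximal ideal. -/
def PerfectResidue (K L : Type) [Field K] [Field L] [Algebra K L]
    (v : L → ℚ) (p : ℕ) : Prop :=
  ∀ x : K, x ≠ 0 → v (algebraMap K L x) = 0 →
    ∃ y : K, x = y ^ p ∨ (x - y ^ p ≠ 0 ∧ 0 < v (algebraMap K L (x - y ^ p)))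

/-- `ω` is a nonzero Teichmüller representative of `K`: a unit of the valuation
ring admitting `p^m`-th roots for every `m`. -/
def IsTeichmuller (K L : Type) [Field K] [Field L] [Algebra K L]
    (v : L → ℚ) (p : ℕ) (ω : K) : Prop :=
  ω ≠ 0 ∧ v (algebraMap K L ω) = 0 ∧ ∀ m : ℕ, ∃ y : K, y ^ p ^ m = ω

/-- `ĩ_j = min{n·v(c_h) − h : 1 ≤ h ≤ n, v_p(h) ≤ j}`, computed in `ℕ∞` from
the function `w h = n·(valuation of c_h)` data `w h = v(c_h)`. -/
noncomputable def itildeIdx (p n : ℕ) (w : ℕ → ℕ∞) (j : ℕ) : ℕ∞ :=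
  ⨅ h : {h : ℕ // 1 ≤ h ∧ h ≤ n ∧ padicValNat p h ≤ j},
    ((n : ℕ∞) * w h.1 - (h.1 : ℕ∞))

/-- `i_j = min{ĩ_{j'} + (j' − j) n e_K : j ≤ j' ≤ k}`. -/
noncomputable def insepIdx (p n k : ℕ) (eK : ℕ∞) (w : ℕ → ℕ∞) (j : ℕ) : ℕ∞ :=
  ⨅ j' : {j' : ℕ // j ≤ j' ∧ j' ≤ k},
    itildeIdx p n w j'.1 + ((j'.1 : ℕ∞) - (j : ℕ∞)) * (n : ℕ∞) * eK

/-- The valuation (in `ℕ∞`, with `⊤` for the zero coefficient) of the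
coefficient `c_h` of the minimal polynomial
`X^n − c_1 X^{n-1} + ⋯ + (−1)^n c_n` of `πL`, so that
`(−1)^h c_h = coeff (n−h)`. -/
noncomputable def coeffVal (K L : Type) [Field K] [Field L] [Algebra K L]
    (v : L → ℚ) (n : ℕ) (πL : L) (h : ℕ) : ℕ∞ :=
  if (minpoly K πL).coeff (n - h) = 0 then ⊤
  else ((v (algebraMap K L ((minpoly K πL).coeff (n - h)))).num).toNat

/-- `e_K = v_K(p)`, with `e_K = ∞` when `char K = p`. -/
noncomputable def eAbs (K L : Type) [Field K] [Field L] [Algebra K L]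
    (v : L → ℚ) (p : ℕ) : ℕ∞ :=
  if (p : K) = 0 then ⊤ else ((v (algebraMap K L (p : K))).num).toNat

/-- `L/K` has indices of inseparability `i 0, …, i k`: the indices computed
from the minimal polynomial of a uniformizer of `L` are given by `i`. -/
def HasInsepIndices (K L : Type) [Field K] [Field L] [Algebra K L]
    (v : L → ℚ) (p n k : ℕ) (i : ℕ → ℕ∞) : Prop :=
  ∃ πL : L, v πL = 1 / (n : ℚ) ∧ Algebra.adjoin K {πL} = ⊤ ∧
    ∀ j ≤ k, insepIdx p n k (eAbs K L v p) (coeffVal K L v n πL) j = i j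

section Val
variable {K L : Type} [Field K] [Field L] [Algebra K L] {v : L → ℚ} {n : ℕ}
variable (hv : ExtValuation K L v n)
include hv

lemma v_one : v 1 = 0 := by
  have := hv.map_mul 1 1 one_ne_zero one_ne_zero
  simp at this; linarith

lemma v_neg_one : v (-1 : L) = 0 := by
  have := hv.map_mul (-1) (-1) (by norm_num) (by norm_num)
  simp [v_one hv] at this; linarith

lemma v_neg (x : L) (hx : x ≠ 0) : v (-x) = v x := by
  have := hv.map_mul (-1) x (by norm_num) hx
  simp [v_neg_one hv] at this; simpa using this

lemma v_pow (x : L) (hx : x ≠ 0) (k : ℕ) : v (x ^ k) = k * v x := by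
  induction k with
  | zero => simpa using v_one hv
  | succ k ih =>
      rw [pow_succ, hv.map_mul _ x (pow_ne_zero _ hx) hx, ih]
      push_cast; ring

lemma v_add_eq_left (x y : L) (hx : x ≠ 0) (hy : y ≠ 0) (hlt : v x < v y) :
    x + y ≠ 0 ∧ v (x + y) = v x := by
  have hne : x + y ≠ 0 := by
    intro h
    have : y = -x := by linear_combination h
    rw [this, v_neg hv x hx] at hlt; exact lt_irrefl _ hlt
  refine ⟨hne, ?_⟩
  have h1 := hv.map_add x y hx hy hne
  rw [min_eq_left hlt.le] at h1
  rcases eq_or_lt_of_le h1 with h2 | h2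
  · exact h2.symm
  · exfalso
    have h3 := hv.map_add (x+y) (-y) hne (neg_ne_zero.mpr hy) (by simpa using hx)
    simp only [add_neg_cancel_right] at h3
    rw [v_neg hv y hy] at h3
    rcases min_le_iff.mp h3 with h | h <;> linarith

/-- Lemma A -/
lemma v_sum_lb {ι : Type*} (s : Finset ι) (t : ι → L) (c : ℚ)
    (h : ∀ i ∈ s, t i ≠ 0 ∧ c ≤ v (t i)) :
    (∑ i ∈ s, t i) = 0 ∨ ((∑ i ∈ s, t i) ≠ 0 ∧ c ≤ v (∑ i ∈ s, t i)) := by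
  classical
  induction s using Finset.cons_induction with
  | empty => simp
  | cons a s ha ih =>
      rw [Finset.sum_cons]
      obtain ⟨hta, hca⟩ := h a (Finset.mem_cons_self a s)
      rcases ih (fun i hi => h i (Finset.mem_cons_of_mem hi)) with h0 | ⟨hne, hc⟩
      · rw [h0, add_zero]; exact Or.inr ⟨hta, hca⟩
      · by_cases hz : t a + ∑ i ∈ s, t i = 0
        · exact Or.inl hz
        · refine Or.inr ⟨hz, ?_⟩
          have := hv.map_add _ _ hta hne hz
          exact le_trans (le_min hca hc) this

/-- Lemma B -/
lemma v_dominant {ι : Type*} (s : Finset ι) (t : ι → L) (x : L) (hx : x ≠ 0)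
    (h : ∀ i ∈ s, t i = 0 ∨ (t i ≠ 0 ∧ v x < v (t i))) :
    x + ∑ i ∈ s, t i ≠ 0 := by
  classical
  set s' := s.filter (fun i => t i ≠ 0) with hs'
  have hsum : ∑ i ∈ s, t i = ∑ i ∈ s', t i := by
    rw [hs', Finset.sum_filter_ne_zero]
  rw [hsum]
  rcases s'.eq_empty_or_nonempty with he | hne
  · simpa [he] using hx
  · obtain ⟨i₀, hi₀, hmin⟩ := s'.exists_min_image (fun i => v (t i)) hne
    have hi₀s : t i₀ ≠ 0 := (Finset.mem_filter.mp hi₀).2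
    have hxi₀ : v x < v (t i₀) := by
      rcases h i₀ (Finset.mem_filter.mp hi₀).1 with h0 | ⟨_, hlt⟩
      · exact absurd h0 hi₀s
      · exact hlt
    rcases v_sum_lb hv s' t (v (t i₀)) (fun i hi => ⟨(Finset.mem_filter.mp hi).2, hmin i hi⟩)
      with h0 | ⟨hne2, hc⟩
    · simpa [h0] using hx
    · intro hcontra
      have : ∑ i ∈ s', t i = -x := by linear_combination hcontra
      rw [this, v_neg hv x hx] at hc
      linarith

/-- Lemma C -/
lemma v_sum_ne_zero {ι : Type*} (s : Finset ι) (t : ι → L) (hs : s.Nonempty)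
    (h0 : ∀ i ∈ s, t i ≠ 0)
    (hinj : ∀ i ∈ s, ∀ j ∈ s, i ≠ j → v (t i) ≠ v (t j)) :
    (∑ i ∈ s, t i) ≠ 0 := by
  classical
  obtain ⟨i₀, hi₀, hmin⟩ := s.exists_min_image (fun i => v (t i)) hs
  rw [← Finset.add_sum_erase s t hi₀]
  refine v_dominant hv _ _ _ (h0 i₀ hi₀) ?_
  intro i hi
  have his : i ∈ s := Finset.mem_of_mem_erase hi
  have hne : i ≠ i₀ := Finset.ne_of_mem_erase hi
  refine Or.inr ⟨h0 i his, lt_of_le_of_ne (hmin i his) (hinj i₀ hi₀ i his hne.symm)⟩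

end Val

section Master
variable {K L : Type} [Field K] [Field L] [Algebra K L] {v : L → ℚ} {n : ℕ}

lemma v_dominant3 (hv : ExtValuation K L v n) (x y z w : L) (hx : x ≠ 0)
    (hy : y = 0 ∨ (y ≠ 0 ∧ v x < v y)) (hz : z = 0 ∨ (z ≠ 0 ∧ v x < v z))
    (hw : w = 0 ∨ (w ≠ 0 ∧ v x < v w)) : x + y + z + w ≠ 0 := by
  have key := v_dominant hv (Finset.range 3)
    (fun i => if i = 0 then y else if i = 1 then z else w) x hx ?_
  · have hsum : ∑ i ∈ Finset.range 3, (fun i => if i = 0 then y else if i = 1 then z else w) i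
        = y + z + w := by
      simp [Finset.sum_range_succ]
    rw [hsum] at key
    intro hc; exact key (by linear_combination hc)
  · intro i hi
    simp only [Finset.mem_range] at hi
    interval_cases i <;> simpa

lemma v_unit_pow (hv : ExtValuation K L v n) (πK : K) (hπK0 : πK ≠ 0)
    (hπK : v (algebraMap K L πK) = 1) (s A : ℕ) :
    v (algebraMap K L ((-1 : K) ^ s * πK ^ A)) = (A : ℚ) := by
  have h1 : algebraMap K L ((-1 : K) ^ s * πK ^ A)
      = (-1 : L) ^ s * (algebraMap K L πK) ^ A := by
    rw [map_mul, map_pow, map_pow, map_neg, map_one]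
  have hπKL : algebraMap K L πK ≠ 0 := (map_ne_zero (algebraMap K L)).mpr hπK0
  rw [h1, hv.map_mul _ _ (pow_ne_zero _ (by norm_num)) (pow_ne_zero _ hπKL),
    v_pow hv _ (by norm_num) s, v_pow hv _ hπKL A, v_neg_one hv, hπK]
  ring

/-- Newton polygon argument: the valuation of a root. -/
lemma v_root (p : ℕ) [Fact p.Prime] (hv : ExtValuation K L v (p ^ 2))
    (πK : K) (hπK0 : πK ≠ 0) (hπK : v (algebraMap K L πK) = 1)
    (e A1 b1 : ℕ) (hA11 : 1 ≤ A1) (hA1e : A1 ≤ e)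
    (hb1l : p < b1) (hb1u : b1 < p ^ 2)
    (a : K) (ha : a = 0 ∨ (a ≠ 0 ∧ v (algebraMap K L a) = ((A1 + e : ℕ) : ℚ)))
    (πL : L) (hπL0 : πL ≠ 0)
    (heq : πL ^ (p ^ 2) + algebraMap K L a * πL ^ (p ^ 2 - b1 + 1)
      + algebraMap K L ((-1 : K) ^ b1 * πK ^ A1) * πL ^ (p ^ 2 - b1)
      - algebraMap K L πK = 0) :
    v πL = 1 / ((p ^ 2 : ℕ) : ℚ) := by
  set n' := p ^ 2 with hn
  set m := n' - b1 with hm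
  have hp2 : 2 ≤ p := (Fact.out : p.Prime).two_le
  have hp4 : 4 ≤ n' := by nlinarith
  have hb3 : 3 ≤ b1 := by omega
  have hmb : m + b1 = n' := by omega
  have hm1 : m + 1 = n' - b1 + 1 := by omega
  have hπKL : algebraMap K L πK ≠ 0 := (map_ne_zero (algebraMap K L)).mpr hπK0
  have hb0 : algebraMap K L ((-1 : K) ^ b1 * πK ^ A1) ≠ 0 :=
    (map_ne_zero (algebraMap K L)).mpr
      (mul_ne_zero (pow_ne_zero _ (by norm_num)) (pow_ne_zero _ hπK0))
  have hvb := v_unit_pow hv πK hπK0 hπK b1 A1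
  set t := v πL with htdef
  have hnQ : (0 : ℚ) < ((n' : ℕ) : ℚ) := by positivity
  have hcast : ((n' : ℕ) : ℚ) = ((m : ℕ) : ℚ) + ((b1 : ℕ) : ℚ) := by
    rw [← hmb]; push_cast; ring
  have hb1Q : (3 : ℚ) ≤ (b1 : ℚ) := by exact_mod_cast hb3
  have hb1nQ : ((b1 : ℕ) : ℚ) ≤ ((n' : ℕ) : ℚ) := by exact_mod_cast hb1u.le
  have hA1Q : (1 : ℚ) ≤ (A1 : ℚ) := by exact_mod_cast hA11
  have hAeQ : (A1 : ℚ) ≤ (e : ℚ) := by exact_mod_cast hA1e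
  have hvT1 : v (πL ^ n') = ((n' : ℕ) : ℚ) * t := v_pow hv _ hπL0 n'
  have hvT3 : v (algebraMap K L ((-1 : K) ^ b1 * πK ^ A1) * πL ^ m)
      = (A1 : ℚ) + (m : ℚ) * t := by
    rw [hv.map_mul _ _ hb0 (pow_ne_zero _ hπL0), hvb, v_pow hv _ hπL0]
  have hvT4 : v (-(algebraMap K L πK)) = 1 := by rw [v_neg hv _ hπKL, hπK]
  by_contra hne
  rcases lt_or_gt_of_ne hne with hlt | hgt
  · -- t < 1/n : πL^n strictly dominant
    have hsmall : ∀ c : ℚ, 0 < c → c ≤ ((n' : ℕ) : ℚ) → c * t < 1 := by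
      intro c hc hcn
      rcases le_or_gt t 0 with h0 | h0
      · nlinarith
      · have h1 : c * t < c * (1 / ((n':ℕ):ℚ)) := mul_lt_mul_of_pos_left hlt hc
        have h2 : c * (1 / ((n':ℕ):ℚ)) ≤ 1 := by
          rw [mul_one_div, div_le_one hnQ]; exact hcn
        linarith
    refine v_dominant3 hv (πL ^ n') (algebraMap K L a * πL ^ (m + 1))
      (algebraMap K L ((-1 : K) ^ b1 * πK ^ A1) * πL ^ m) (-(algebraMap K L πK))
      (pow_ne_zero _ hπL0) ?_ ?_ ?_ ?_
    · rcases ha with rfl | ⟨ha0, hva⟩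
      · left; simp
      · right
        have haL : algebraMap K L a ≠ 0 := (map_ne_zero (algebraMap K L)).mpr ha0
        refine ⟨mul_ne_zero haL (pow_ne_zero _ hπL0), ?_⟩
        rw [hv.map_mul _ _ haL (pow_ne_zero _ hπL0), hva, v_pow hv _ hπL0 n',
          v_pow hv _ hπL0 (m+1)]
        have h1 : (((b1:ℕ):ℚ) - 1) * t < 1 := hsmall _ (by linarith) (by linarith)
        have hva2 : ((A1 + e : ℕ) : ℚ) = (A1 : ℚ) + (e : ℚ) := by push_cast; ring
        rw [hva2, hcast]
        push_cast
        nlinarith [h1]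
    · right
      refine ⟨mul_ne_zero hb0 (pow_ne_zero _ hπL0), ?_⟩
      rw [hvT3, hvT1, hcast]
      have h1 : ((b1:ℕ):ℚ) * t < 1 := hsmall _ (by linarith) hb1nQ
      nlinarith [h1]
    · right
      refine ⟨neg_ne_zero.mpr hπKL, ?_⟩
      rw [hvT4, hvT1]
      exact hsmall _ (by linarith) le_rfl
    · linear_combination heq
  · -- t > 1/n : πK strictly dominant
    have ht0 : 0 < t := lt_trans (by positivity) hgt
    have hn1 : 1 < ((n' : ℕ) : ℚ) * t := by
      have := mul_lt_mul_of_pos_left hgt hnQ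
      rw [mul_one_div, div_self (ne_of_gt hnQ)] at this
      exact this
    refine v_dominant3 hv (-(algebraMap K L πK)) (πL ^ n')
      (algebraMap K L a * πL ^ (m + 1))
      (algebraMap K L ((-1 : K) ^ b1 * πK ^ A1) * πL ^ m)
      (neg_ne_zero.mpr hπKL) ?_ ?_ ?_ ?_
    · right
      exact ⟨pow_ne_zero _ hπL0, by rw [hvT4, hvT1]; exact hn1⟩
    · rcases ha with rfl | ⟨ha0, hva⟩
      · left; simp
      · right
        have haL : algebraMap K L a ≠ 0 := (map_ne_zero (algebraMap K L)).mpr ha0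
        refine ⟨mul_ne_zero haL (pow_ne_zero _ hπL0), ?_⟩
        rw [hv.map_mul _ _ haL (pow_ne_zero _ hπL0), hva, v_pow hv _ hπL0 (m+1), hvT4]
        have h2 : (0:ℚ) ≤ ((m+1 : ℕ) : ℚ) * t := by positivity
        have h3 : ((A1 + e : ℕ) : ℚ) = (A1 : ℚ) + (e : ℚ) := by push_cast; ring
        rw [h3]
        linarith
    · right
      refine ⟨mul_ne_zero hb0 (pow_ne_zero _ hπL0), ?_⟩
      rw [hvT3, hvT4]
      have hmQ : (1:ℚ) ≤ ((m:ℕ):ℚ) := by exact_mod_cast (by omega : 1 ≤ m)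
      have h2 : t ≤ ((m:ℕ):ℚ) * t := le_mul_of_one_le_left ht0.le hmQ
      linarith
    · linear_combination heq
end Master

section Master2
variable {K L : Type} [Field K] [Field L] [Algebra K L] {v : L → ℚ}

lemma int_helper (E mi mj i j : ℤ) (h : mi * E + i = mj * E + j)
    (hi0 : 0 ≤ i) (hj0 : 0 ≤ j) (hiE : i < E) (hjE : j < E) : i = j := by
  have hdvd : E ∣ (i - j) := ⟨mj - mi, by linear_combination h⟩
  rcases hdvd with ⟨k, hk⟩
  rcases lt_trichotomy k 0 with hneg | rfl | hpos
  · nlinarith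
  · omega
  · nlinarith

/-- A generator of valuation `1/n` with `n = p^2` and adjoin top has minpoly of
degree `n`; any monic degree-`n` polynomial with it as root is the minpoly. -/
lemma minpoly_eq_poly (n : ℕ) (hn0 : 0 < n) (hv : ExtValuation K L v n)
    (πL : L) (hπL0 : πL ≠ 0) (ht : v πL = 1 / ((n : ℕ) : ℚ))
    (F : K[X]) (hF : F.Monic) (hdeg : F.natDegree = n)
    (hroot : Polynomial.aeval πL F = 0) :
    minpoly K πL = F ∧ IsIntegral K πL := by
  have hint : IsIntegral K πL := ⟨F, hF, hroot⟩
  set q := minpoly K πL with hq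
  have hqmonic : q.Monic := minpoly.monic hint
  have hqdvd : q ∣ F := minpoly.dvd K πL hroot
  have hqne : q ≠ 0 := hqmonic.ne_zero
  have hdle : q.natDegree ≤ n := hdeg ▸ Polynomial.natDegree_le_of_dvd hqdvd hF.ne_zero
  set d := q.natDegree with hd
  have hnQ : (0 : ℚ) < ((n : ℕ) : ℚ) := by exact_mod_cast hn0
  -- d = n
  have hdn : d = n := by
    by_contra hdn
    have hdlt : d < n := lt_of_le_of_ne hdle hdn
    have haev : Polynomial.aeval πL q = 0 := minpoly.aeval K πL
    rw [Polynomial.aeval_eq_sum_range] at haev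
    have hsmul : ∀ i : ℕ, q.coeff i • πL ^ i = algebraMap K L (q.coeff i) * πL ^ i := by
      intro i; rw [Algebra.smul_def]
    simp only [hsmul] at haev
    set s := (Finset.range (d + 1)).filter (fun i => q.coeff i ≠ 0) with hs
    have hsum : ∑ i ∈ s, algebraMap K L (q.coeff i) * πL ^ i = 0 := by
      rw [hs, Finset.sum_filter_of_ne, haev]
      intro i _ hne hc
      exact hne (by rw [hc, map_zero, zero_mul])
    have hds : d ∈ s := by
      rw [hs, Finset.mem_filter]
      exact ⟨Finset.self_mem_range_succ d, by rw [hqmonic.coeff_natDegree]; exact one_ne_zero⟩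
    refine v_sum_ne_zero hv s _ ⟨d, hds⟩ ?_ ?_ hsum
    · intro i hi
      exact mul_ne_zero ((_root_.map_ne_zero (algebraMap K L)).mpr (Finset.mem_filter.mp hi).2)
        (pow_ne_zero _ hπL0)
    · intro i hi j hj hij
      have hci : q.coeff i ≠ 0 := (Finset.mem_filter.mp hi).2
      have hcj : q.coeff j ≠ 0 := (Finset.mem_filter.mp hj).2
      have hiL : algebraMap K L (q.coeff i) ≠ 0 := (_root_.map_ne_zero (algebraMap K L)).mpr hci
      have hjL : algebraMap K L (q.coeff j) ≠ 0 := (_root_.map_ne_zero (algebraMap K L)).mpr hcj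
      obtain ⟨mi, hmi⟩ := hv.int_on_base _ hci
      obtain ⟨mj, hmj⟩ := hv.int_on_base _ hcj
      rw [hv.map_mul _ _ hiL (pow_ne_zero _ hπL0), hv.map_mul _ _ hjL (pow_ne_zero _ hπL0),
        v_pow hv _ hπL0, v_pow hv _ hπL0, hmi, hmj, ht]
      intro hcontra
      have hiran : i < n := by
        have := (Finset.mem_range.mp (Finset.mem_filter.mp hi).1); omega
      have hjran : j < n := by
        have := (Finset.mem_range.mp (Finset.mem_filter.mp hj).1); omega
      have hQ : (mi : ℚ) * ((n:ℕ):ℚ) + (i : ℚ) = (mj : ℚ) * ((n:ℕ):ℚ) + (j : ℚ) := by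
        field_simp at hcontra
        linarith
      have hZ : mi * (n : ℤ) + (i : ℤ) = mj * (n : ℤ) + (j : ℤ) := by
        exact_mod_cast hQ
      have hij2 := int_helper (n : ℤ) mi mj i j hZ (by positivity) (by positivity)
        (by exact_mod_cast hiran) (by exact_mod_cast hjran)
      exact hij (by exact_mod_cast hij2)
  have : q = F := (Polynomial.eq_of_monic_of_dvd_of_natDegree_le hqmonic hF hqdvd
    (le_of_eq (by rw [hdeg, ← hdn]))).symm
  exact ⟨this, hint⟩
end Master2

section Master3
variable {K : Type} [Field K]
open Polynomial

lemma F_facts (a b c : K) (n m : ℕ) (h1 : m + 1 < n) (h0 : 0 < m) :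
    (X ^ n + C a * X ^ (m+1) + C b * X ^ m - C c).coeff n = 1 ∧
    (X ^ n + C a * X ^ (m+1) + C b * X ^ m - C c).coeff (m+1) = a ∧
    (X ^ n + C a * X ^ (m+1) + C b * X ^ m - C c).coeff m = b ∧
    (X ^ n + C a * X ^ (m+1) + C b * X ^ m - C c).coeff 0 = -c ∧
    (∀ i, i ≠ n → i ≠ m + 1 → i ≠ m → i ≠ 0 →
      (X ^ n + C a * X ^ (m+1) + C b * X ^ m - C c).coeff i = 0) ∧
    (X ^ n + C a * X ^ (m+1) + C b * X ^ m - C c).Monic ∧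
    (X ^ n + C a * X ^ (m+1) + C b * X ^ m - C c).natDegree = n := by
  have e1 : (X ^ n + C a * X ^ (m+1) + C b * X ^ m - C c).coeff n = 1 := by
    simp only [coeff_sub, coeff_add, coeff_C_mul, coeff_X_pow, coeff_C]
    split_ifs <;> first | ring1 | (exfalso; first | assumption | omega)
  have e2 : (X ^ n + C a * X ^ (m+1) + C b * X ^ m - C c).coeff (m+1) = a := by
    simp only [coeff_sub, coeff_add, coeff_C_mul, coeff_X_pow, coeff_C]
    split_ifs <;> first | ring1 | (exfalso; first | assumption | omega)
  have e3 : (X ^ n + C a * X ^ (m+1) + C b * X ^ m - C c).coeff m = b := by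
    simp only [coeff_sub, coeff_add, coeff_C_mul, coeff_X_pow, coeff_C]
    split_ifs <;> first | ring1 | (exfalso; first | assumption | omega)
  have e4 : (X ^ n + C a * X ^ (m+1) + C b * X ^ m - C c).coeff 0 = -c := by
    simp only [coeff_sub, coeff_add, coeff_C_mul, coeff_X_pow, coeff_C]
    split_ifs <;> first | ring1 | (exfalso; first | assumption | omega)
  have e5 : ∀ i, i ≠ n → i ≠ m + 1 → i ≠ m → i ≠ 0 →
      (X ^ n + C a * X ^ (m+1) + C b * X ^ m - C c).coeff i = 0 := by
    intro i hn hm1 hm hz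
    simp only [coeff_sub, coeff_add, coeff_C_mul, coeff_X_pow, coeff_C]
    split_ifs <;> first | ring1 | (exfalso; first | assumption | omega)
  have hdegle : (X ^ n + C a * X ^ (m+1) + C b * X ^ m - C c).natDegree ≤ n := by
    compute_degree <;> omega
  have hmonic : (X ^ n + C a * X ^ (m+1) + C b * X ^ m - C c).Monic :=
    Polynomial.monic_of_natDegree_le_of_coeff_eq_one n hdegle e1
  refine ⟨e1, e2, e3, e4, e5, hmonic, ?_⟩
  exact le_antisymm hdegle (Polynomial.le_natDegree_of_ne_zero (by rw [e1]; exact one_ne_zero))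
end Master3

section Master4
variable {K L : Type} [Field K] [Field L] [Algebra K L] {v : L → ℚ}
open Polynomial

lemma enat_term (n c h : ℕ) : (n:ℕ∞) * (c:ℕ∞) - (h:ℕ∞) = ((n*c - h : ℕ) : ℕ∞) := by
  rw [← Nat.cast_mul]; exact rfl

lemma enat_top_term (n h : ℕ) (hn : n ≠ 0) : (n:ℕ∞) * ⊤ - (h:ℕ∞) = ⊤ := by
  simp [hn]

lemma enat_add_le {x : ℕ∞} {A B C : ℕ} (h : (A:ℕ∞) ≤ x) (hBC : C ≤ A + B) :
    (C:ℕ∞) ≤ x + (B:ℕ∞) := by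
  calc (C:ℕ∞) ≤ ((A+B : ℕ) : ℕ∞) := Nat.cast_le.mpr hBC
  _ = (A:ℕ∞) + (B:ℕ∞) := by push_cast; ring
  _ ≤ x + (B:ℕ∞) := add_le_add_left h _

lemma natcast_num_toNat (k : ℕ) : ((((k : ℕ) : ℚ).num).toNat : ℕ∞) = (k : ℕ∞) := by
  simp

lemma master (p : ℕ) [Fact p.Prime] (hv : ExtValuation K L v (p ^ 2))
    (πK : K) (hπK0 : πK ≠ 0) (hπK : v (algebraMap K L πK) = 1)
    (e : ℕ) (he : eAbs K L v p = (e : ℕ∞))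
    (A1 b1 : ℕ) (hA11 : 1 ≤ A1) (hA1e : A1 ≤ e)
    (hpb : p ∣ b1) (hb1l : p < b1) (hb1u : b1 < p ^ 2)
    (a : K) (ha : a = 0 ∨ (a ≠ 0 ∧ v (algebraMap K L a) = ((A1 + e : ℕ) : ℚ)))
    (πL : L)
    (hroot : Polynomial.aeval πL (X ^ p ^ 2 + C a * X ^ (p ^ 2 - b1 + 1)
      + C ((-1 : K) ^ b1 * πK ^ A1) * X ^ (p ^ 2 - b1) - C πK) = 0)
    (hgen : Algebra.adjoin K {πL} = ⊤) :
    Module.finrank K L = p ^ 2 ∧ v πL = 1 / ((p ^ 2 : ℕ) : ℚ) ∧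
      insepIdx p (p ^ 2) 2 (eAbs K L v p) (coeffVal K L v (p ^ 2) πL) 0
        = ((p ^ 2 * (A1 + e) - b1 : ℕ) : ℕ∞) ∧
      insepIdx p (p ^ 2) 2 (eAbs K L v p) (coeffVal K L v (p ^ 2) πL) 1
        = ((p ^ 2 * A1 - b1 : ℕ) : ℕ∞) ∧
      insepIdx p (p ^ 2) 2 (eAbs K L v p) (coeffVal K L v (p ^ 2) πL) 2 = 0 := by
  have hp2 : 2 ≤ p := (Fact.out : p.Prime).two_le
  have hp4 : 4 ≤ p ^ 2 := by nlinarith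
  have hb3 : 3 ≤ b1 := by omega
  have hm1n : (p ^ 2 - b1) + 1 < p ^ 2 := by omega
  have hm0 : 0 < p ^ 2 - b1 := by omega
  obtain ⟨e1, e2, e3, e4, e5, hmonic, hdeg⟩ :=
    F_facts a ((-1 : K) ^ b1 * πK ^ A1) πK (p ^ 2) (p ^ 2 - b1) hm1n hm0
  -- πL ≠ 0
  have hπL0 : πL ≠ 0 := by
    intro h
    rw [h] at hroot
    simp only [map_add, map_sub, map_mul, map_pow, Polynomial.aeval_X, Polynomial.aeval_C,
      zero_pow (by omega : p ^ 2 ≠ 0), zero_pow (by omega : (p ^ 2 - b1) + 1 ≠ 0),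
      zero_pow (by omega : p ^ 2 - b1 ≠ 0), mul_zero, add_zero, zero_add, zero_sub,
      neg_eq_zero] at hroot
    exact hπK0 ((_root_.map_eq_zero (algebraMap K L)).mp hroot)
  -- the root equation
  have heq : πL ^ (p ^ 2) + algebraMap K L a * πL ^ (p ^ 2 - b1 + 1)
      + algebraMap K L ((-1 : K) ^ b1 * πK ^ A1) * πL ^ (p ^ 2 - b1)
      - algebraMap K L πK = 0 := by
    simpa only [map_add, map_sub, map_mul, map_pow, Polynomial.aeval_X, Polynomial.aeval_C]
      using hroot
  have ht : v πL = 1 / ((p ^ 2 : ℕ) : ℚ) :=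
    v_root p hv πK hπK0 hπK e A1 b1 hA11 hA1e hb1l hb1u a ha πL hπL0 heq
  obtain ⟨hFq, hint⟩ := minpoly_eq_poly (p ^ 2) (by omega) hv πL hπL0 ht _ hmonic hdeg hroot
  -- finrank
  have hfr : Module.finrank K L = p ^ 2 := by
    have eqv : Algebra.adjoin K {πL} ≃ₐ[K] L :=
      (Subalgebra.equivOfEq _ _ hgen).trans Subalgebra.topEquiv
    have h1 := ((Algebra.adjoin.powerBasis hint).map eqv).finrank
    rw [h1, PowerBasis.map_dim, Algebra.adjoin.powerBasis_dim hint, hFq, hdeg]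
  -- coefficient valuations
  set w := coeffVal K L v (p ^ 2) πL with hw
  have hvb := v_unit_pow hv πK hπK0 hπK b1 A1
  have hwb1 : w b1 = (A1 : ℕ∞) := by
    rw [hw, coeffVal, hFq, e3, if_neg (mul_ne_zero (pow_ne_zero _ (by norm_num))
      (pow_ne_zero _ hπK0)), hvb, natcast_num_toNat]
  have hwp2 : w (p ^ 2) = (1 : ℕ∞) := by
    have h0 : p ^ 2 - p ^ 2 = 0 := by omega
    rw [hw, coeffVal, h0, hFq, e4, if_neg (neg_ne_zero.mpr hπK0)]
    have hv1 : v (algebraMap K L (-πK)) = 1 := by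
      rw [map_neg, v_neg hv _ ((_root_.map_ne_zero (algebraMap K L)).mpr hπK0), hπK]
    rw [hv1]
    exact natcast_num_toNat 1
  have hwbm : w (b1 - 1) = ⊤ ∨ w (b1 - 1) = ((A1 + e : ℕ) : ℕ∞) := by
    have hsub : p ^ 2 - (b1 - 1) = (p ^ 2 - b1) + 1 := by omega
    rcases ha with rfl | ⟨ha0, hva⟩
    · left; rw [hw, coeffVal, hsub, hFq, e2, if_pos rfl]
    · right
      rw [hw, coeffVal, hsub, hFq, e2, if_neg ha0, hva, natcast_num_toNat]
  have hwtop : ∀ h, 1 ≤ h → h ≤ p ^ 2 → h ≠ b1 - 1 → h ≠ b1 → h ≠ p ^ 2 → w h = ⊤ := by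
    intro h h1 h2 h3 h4 h5
    rw [hw, coeffVal, hFq, e5 _ (by omega) (by omega) (by omega) (by omega), if_pos rfl]
  -- padic valuations
  have hpad1 : padicValNat p b1 = 1 := by
    obtain ⟨c, hcd⟩ := hpb
    have hc0 : c ≠ 0 := by rintro rfl; omega
    have hc1 : 1 < c := by
      by_contra hcon; push_neg at hcon
      interval_cases c <;> omega
    have hcp : c < p := by
      have h2 := hb1u
      rw [hcd, pow_two] at h2
      exact Nat.lt_of_mul_lt_mul_left h2
    have hpc : ¬ p ∣ c := fun hd => by have := Nat.le_of_dvd (by omega) hd; omega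
    rw [hcd, padicValNat.mul (by omega) hc0, padicValNat.self (by omega),
      padicValNat.eq_zero_of_not_dvd hpc]
  have hpadm : padicValNat p (b1 - 1) = 0 := by
    apply padicValNat.eq_zero_of_not_dvd
    intro hd
    have h2 := Nat.dvd_sub hpb hd
    rw [(by omega : b1 - (b1 - 1) = 1)] at h2
    have := Nat.le_of_dvd one_pos h2
    omega
  have hpad2 : padicValNat p (p ^ 2) = 2 := padicValNat.prime_pow 2
  -- nat product abstraction
  obtain ⟨PA, hPA⟩ : ∃ x, p ^ 2 * A1 = x := ⟨_, rfl⟩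
  obtain ⟨PE, hPE⟩ : ∃ x, p ^ 2 * e = x := ⟨_, rfl⟩
  have hPAE : p ^ 2 * (A1 + e) = PA + PE := by rw [← hPA, ← hPE]; ring
  have hbPA : b1 ≤ PA := by
    rw [← hPA]
    calc b1 ≤ p ^ 2 := hb1u.le
    _ ≤ p ^ 2 * A1 := Nat.le_mul_of_pos_right _ (by omega)
  have hPAPE : PA ≤ PE := by rw [← hPA, ← hPE]; exact Nat.mul_le_mul_left _ hA1e
  -- itilde bounds
  have hup1 : itildeIdx p (p ^ 2) w 1 ≤ ((p ^ 2 * A1 - b1 : ℕ) : ℕ∞) := by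
    have h1 := iInf_le (fun h : {h : ℕ // 1 ≤ h ∧ h ≤ p ^ 2 ∧ padicValNat p h ≤ 1} =>
      (((p ^ 2 : ℕ) : ℕ∞) * w h.1 - (h.1 : ℕ∞))) ⟨b1, by omega, by omega, by rw [hpad1]⟩
    rw [itildeIdx]
    refine le_trans h1 ?_
    dsimp only
    rw [hwb1, enat_term]
  have hup2 : itildeIdx p (p ^ 2) w 2 ≤ 0 := by
    have h1 := iInf_le (fun h : {h : ℕ // 1 ≤ h ∧ h ≤ p ^ 2 ∧ padicValNat p h ≤ 2} =>
      (((p ^ 2 : ℕ) : ℕ∞) * w h.1 - (h.1 : ℕ∞))) ⟨p ^ 2, by omega, le_rfl, by rw [hpad2]⟩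
    rw [itildeIdx]
    refine le_trans h1 ?_
    dsimp only
    rw [hwp2, mul_one]
    simp
  have hlow1 : ((p ^ 2 * A1 - b1 : ℕ) : ℕ∞) ≤ itildeIdx p (p ^ 2) w 1 := by
    rw [itildeIdx]
    refine le_iInf ?_
    rintro ⟨h, hh1, hh2, hh3⟩
    dsimp only
    by_cases hc1 : h = p ^ 2
    · exfalso; rw [hc1, hpad2] at hh3; omega
    by_cases hc2 : h = b1
    · rw [hc2, hwb1, enat_term]
    by_cases hc3 : h = b1 - 1
    · rcases hwbm with htop | hval
      · rw [hc3, htop, enat_top_term _ _ (by omega)]; exact le_top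
      · rw [hc3, hval, enat_term]
        refine Nat.cast_le.mpr ?_
        rw [hPA, hPAE]
        omega
    · rw [hwtop h hh1 hh2 hc3 hc2 hc1, enat_top_term _ _ (by omega)]; exact le_top
  have hlow0 : ((p ^ 2 * (A1 + e) - b1 : ℕ) : ℕ∞) ≤ itildeIdx p (p ^ 2) w 0 := by
    rw [itildeIdx]
    refine le_iInf ?_
    rintro ⟨h, hh1, hh2, hh3⟩
    dsimp only
    by_cases hc1 : h = p ^ 2
    · exfalso; rw [hc1, hpad2] at hh3; omega
    by_cases hc2 : h = b1
    · exfalso; rw [hc2, hpad1] at hh3; omega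
    by_cases hc3 : h = b1 - 1
    · rcases hwbm with htop | hval
      · rw [hc3, htop, enat_top_term _ _ (by omega)]; exact le_top
      · rw [hc3, hval, enat_term]
        refine Nat.cast_le.mpr ?_
        rw [hPAE]
        omega
    · rw [hwtop h hh1 hh2 hc3 hc2 hc1, enat_top_term _ _ (by omega)]; exact le_top
  -- insep computations
  rw [he]
  refine ⟨hfr, ht, ?_, ?_, ?_⟩
  · -- j = 0
    refine le_antisymm ?_ ?_
    · have h1 := iInf_le (fun j' : {j' : ℕ // 0 ≤ j' ∧ j' ≤ 2} =>
        itildeIdx p (p ^ 2) w j'.1 + ((j'.1 : ℕ∞) - ((0:ℕ) : ℕ∞)) * ((p ^ 2 : ℕ) : ℕ∞) * (e : ℕ∞))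
        ⟨1, by omega, by omega⟩
      rw [insepIdx]
      refine le_trans h1 ?_
      dsimp only
      have hc : (((1:ℕ) : ℕ∞) - ((0:ℕ) : ℕ∞)) * ((p ^ 2 : ℕ) : ℕ∞) * (e : ℕ∞)
          = ((p ^ 2 * e : ℕ) : ℕ∞) := by push_cast; rw [tsub_zero]; ring
      rw [hc]
      calc itildeIdx p (p ^ 2) w 1 + ((p ^ 2 * e : ℕ) : ℕ∞)
          ≤ ((p ^ 2 * A1 - b1 : ℕ) : ℕ∞) + ((p ^ 2 * e : ℕ) : ℕ∞) := add_le_add_left hup1 _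
        _ = ((p ^ 2 * (A1 + e) - b1 : ℕ) : ℕ∞) := by
            rw [← Nat.cast_add]; congr 1; rw [hPA, hPE, hPAE]; omega
    · rw [insepIdx]
      refine le_iInf ?_
      rintro ⟨j', hj0, hj2⟩
      dsimp only
      interval_cases j'
      · have hc : (((0:ℕ) : ℕ∞) - ((0:ℕ) : ℕ∞)) * ((p ^ 2 : ℕ) : ℕ∞) * (e : ℕ∞) = 0 := by simp
        rw [hc, add_zero]; exact hlow0
      · have hc : (((1:ℕ) : ℕ∞) - ((0:ℕ) : ℕ∞)) * ((p ^ 2 : ℕ) : ℕ∞) * (e : ℕ∞)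
            = ((p ^ 2 * e : ℕ) : ℕ∞) := by push_cast; rw [tsub_zero]; ring
        rw [hc]
        refine enat_add_le hlow1 ?_
        rw [hPA, hPE, hPAE]; omega
      · have hc : (((2:ℕ) : ℕ∞) - ((0:ℕ) : ℕ∞)) * ((p ^ 2 : ℕ) : ℕ∞) * (e : ℕ∞)
            = ((2 * (p ^ 2 * e) : ℕ) : ℕ∞) := by push_cast; rw [tsub_zero]; ring
        rw [hc]
        calc ((p ^ 2 * (A1 + e) - b1 : ℕ) : ℕ∞) ≤ ((2 * (p ^ 2 * e) : ℕ) : ℕ∞) := by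
              refine Nat.cast_le.mpr ?_; rw [hPE, hPAE]; omega
          _ ≤ itildeIdx p (p ^ 2) w 2 + ((2 * (p ^ 2 * e) : ℕ) : ℕ∞) := le_add_self
  · -- j = 1
    refine le_antisymm ?_ ?_
    · have h1 := iInf_le (fun j' : {j' : ℕ // 1 ≤ j' ∧ j' ≤ 2} =>
        itildeIdx p (p ^ 2) w j'.1 + ((j'.1 : ℕ∞) - ((1:ℕ) : ℕ∞)) * ((p ^ 2 : ℕ) : ℕ∞) * (e : ℕ∞))
        ⟨1, le_rfl, by omega⟩
      rw [insepIdx]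
      refine le_trans h1 ?_
      dsimp only
      have hc : (((1:ℕ) : ℕ∞) - ((1:ℕ) : ℕ∞)) * ((p ^ 2 : ℕ) : ℕ∞) * (e : ℕ∞) = 0 := by simp
      rw [hc, add_zero]; exact hup1
    · rw [insepIdx]
      refine le_iInf ?_
      rintro ⟨j', hj1, hj2⟩
      dsimp only
      interval_cases j'
      · have hc : (((1:ℕ) : ℕ∞) - ((1:ℕ) : ℕ∞)) * ((p ^ 2 : ℕ) : ℕ∞) * (e : ℕ∞) = 0 := by simp
        rw [hc, add_zero]; exact hlow1
      · have hc : (((2:ℕ) : ℕ∞) - ((1:ℕ) : ℕ∞)) * ((p ^ 2 : ℕ) : ℕ∞) * (e : ℕ∞)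
            = ((p ^ 2 * e : ℕ) : ℕ∞) := by
          push_cast
          rw [(by decide : (2:ℕ∞) - 1 = 1)]
          ring
        rw [hc]
        calc ((p ^ 2 * A1 - b1 : ℕ) : ℕ∞) ≤ ((p ^ 2 * e : ℕ) : ℕ∞) := by
              refine Nat.cast_le.mpr ?_; rw [hPA, hPE]; omega
          _ ≤ itildeIdx p (p ^ 2) w 2 + ((p ^ 2 * e : ℕ) : ℕ∞) := le_add_self
  · -- j = 2
    refine le_antisymm ?_ zero_le
    have h1 := iInf_le (fun j' : {j' : ℕ // 2 ≤ j' ∧ j' ≤ 2} =>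
      itildeIdx p (p ^ 2) w j'.1 + ((j'.1 : ℕ∞) - ((2:ℕ) : ℕ∞)) * ((p ^ 2 : ℕ) : ℕ∞) * (e : ℕ∞))
      ⟨2, le_rfl, le_rfl⟩
    rw [insepIdx]
    refine le_trans h1 ?_
    dsimp only
    have hc : (((2:ℕ) : ℕ∞) - ((2:ℕ) : ℕ∞)) * ((p ^ 2 : ℕ) : ℕ∞) * (e : ℕ∞) = 0 := by simp
    rw [hc, add_zero]; exact hup2
end Master4

/-- Section 8.4: over a finite extension `K` of `ℚ_p` (`p` odd)
with uniformizer `π_K`, for `1 ≤ A₁ ≤ e_K`, `p ∣ b₁`, `p < b₁ < p²`, the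
Eisenstein polynomials
`f = X^{p²} + (−1)^{b₁−1} π_K^{A₁+e_K} X^{p²−b₁+1} + (−1)^{b₁} π_K^{A₁} X^{p²−b₁} − π_K`
and `g = X^{p²} + (−1)^{b₁} π_K^{A₁} X^{p²−b₁} − π_K` both generate totally
ramified extensions of degree `p²` with indices of inseparability
`i₀ = p²(A₁+e_K) − b₁`, `i₁ = p² A₁ − b₁`, `i₂ = 0`. -/
theorem stmt18 (p : ℕ) [Fact p.Prime] (hodd : p ≠ 2)
    (K : Type) [Field K] [Algebra ℚ_[p] K] [FiniteDimensional ℚ_[p] K]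
    (L M : Type) [Field L] [Field M] [Algebra K L] [Algebra K M]
    (vL : L → ℚ) (vM : M → ℚ)
    (hvL : ExtValuation K L vL (p ^ 2)) (hvM : ExtValuation K M vM (p ^ 2))
    (πK : K) (hπKL : πK ≠ 0 ∧ vL (algebraMap K L πK) = 1)
    (hπKM : vM (algebraMap K M πK) = 1)
    (e : ℕ) (heL : eAbs K L vL p = (e : ℕ∞)) (heM : eAbs K M vM p = (e : ℕ∞))
    (A1 b1 : ℕ) (hA1 : 1 ≤ A1 ∧ A1 ≤ e)
    (hb1 : p ∣ b1 ∧ p < b1 ∧ b1 < p ^ 2)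
    (f g : Polynomial K)
    (hf : f = X ^ p ^ 2 + C ((-1 : K) ^ (b1 - 1) * πK ^ (A1 + e)) * X ^ (p ^ 2 - b1 + 1)
      + C ((-1 : K) ^ b1 * πK ^ A1) * X ^ (p ^ 2 - b1) - C πK)
    (hg : g = X ^ p ^ 2 + C ((-1 : K) ^ b1 * πK ^ A1) * X ^ (p ^ 2 - b1) - C πK)
    (πL : L) (hrootL : Polynomial.aeval πL f = 0)
    (hgenL : Algebra.adjoin K {πL} = ⊤)
    (πM : M) (hrootM : Polynomial.aeval πM g = 0)
    (hgenM : Algebra.adjoin K {πM} = ⊤) :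
    (Module.finrank K L = p ^ 2 ∧ vL πL = 1 / (p ^ 2 : ℚ) ∧
      insepIdx p (p ^ 2) 2 (eAbs K L vL p) (coeffVal K L vL (p ^ 2) πL) 0
        = ((p ^ 2 * (A1 + e) - b1 : ℕ) : ℕ∞) ∧
      insepIdx p (p ^ 2) 2 (eAbs K L vL p) (coeffVal K L vL (p ^ 2) πL) 1
        = ((p ^ 2 * A1 - b1 : ℕ) : ℕ∞) ∧
      insepIdx p (p ^ 2) 2 (eAbs K L vL p) (coeffVal K L vL (p ^ 2) πL) 2 = 0) ∧
    (Module.finrank K M = p ^ 2 ∧ vM πM = 1 / (p ^ 2 : ℚ) ∧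
      insepIdx p (p ^ 2) 2 (eAbs K M vM p) (coeffVal K M vM (p ^ 2) πM) 0
        = ((p ^ 2 * (A1 + e) - b1 : ℕ) : ℕ∞) ∧
      insepIdx p (p ^ 2) 2 (eAbs K M vM p) (coeffVal K M vM (p ^ 2) πM) 1
        = ((p ^ 2 * A1 - b1 : ℕ) : ℕ∞) ∧
      insepIdx p (p ^ 2) 2 (eAbs K M vM p) (coeffVal K M vM (p ^ 2) πM) 2 = 0) := by
  rw [hf] at hrootL
  have hL := master p hvL πK hπKL.1 hπKL.2 e heL A1 b1 hA1.1 hA1.2 hb1.1 hb1.2.1 hb1.2.2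
    ((-1 : K) ^ (b1 - 1) * πK ^ (A1 + e))
    (Or.inr ⟨mul_ne_zero (pow_ne_zero _ (by norm_num)) (pow_ne_zero _ hπKL.1),
      v_unit_pow hvL πK hπKL.1 hπKL.2 (b1 - 1) (A1 + e)⟩)
    πL hrootL hgenL
  have hgM : X ^ p ^ 2 + C (0 : K) * X ^ (p ^ 2 - b1 + 1)
      + C ((-1 : K) ^ b1 * πK ^ A1) * X ^ (p ^ 2 - b1) - C πK = g := by
    rw [hg, Polynomial.C_0, zero_mul, add_zero]
  have hM := master p hvM πK hπKL.1 hπKM e heM A1 b1 hA1.1 hA1.2 hb1.1 hb1.2.1 hb1.2.2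
    (0 : K) (Or.inl rfl) πM (by rw [hgM]; exact hrootM) hgenM
  obtain ⟨l1, l2, l3, l4, l5⟩ := hL
  obtain ⟨m1, m2, m3, m4, m5⟩ := hM
  have hcastL : vL πL = 1 / (p ^ 2 : ℚ) := by rw [l2]; push_cast; ring
  have hcastM : vM πM = 1 / (p ^ 2 : ℚ) := by rw [m2]; push_cast; ring
  exact ⟨⟨l1, hcastL, l3, l4, l5⟩, ⟨m1, hcastM, m3, m4, m5⟩⟩
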